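/- arXiv:2011.10519 — 2 statements merged into one kernel-verified Lean document; each statement's English description precedes it below -/
import Mathlib

section
/- For a Galton–Watson branching process whose offspring law has mean μ < 1 and finite second moment m₂ = E[X²] < ∞, the second moment of the total progeny satisfies E[T²] = ((1 + μ)/(1 − μ)) · Σ_{n=0}^∞ E[Z_n²], and this sum is finite. -/
open MeasureTheory ProbabilityTheory
open scoped ENNReal NNReal

namespace GW

/-- shift lemma for `ℝ≥0∞` tsum -/
lemma tsum_shift (f : ℕ → ℝ≥0∞) (k : ℕ) :
    ∑' n, f n = (∑ i ∈ Finset.range k, f i) + ∑' n, f (n + k) := by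
  have h1 : ∀ n : ℕ, f n = (if n < k then f n else 0) + (if n < k then 0 else f n) := by
    intro n; split <;> simp
  rw [show (∑' n, f n) = ∑' n, ((if n < k then f n else 0) + (if n < k then 0 else f n)) from
    tsum_congr h1, ENNReal.tsum_add]
  congr 1
  · rw [tsum_eq_sum (s := Finset.range k) (fun b hb => if_neg (by simpa using hb))]
    exact Finset.sum_congr rfl fun i hi => if_pos (by simpa using hi)
  · have hinj : Function.Injective (fun n : ℕ => n + k) := fun a b h => by
      simpa using h
    have h2 := hinj.tsum_eq (f := fun n => if n < k then 0 else f n) ?_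
    · rw [← h2]; exact tsum_congr fun n => if_neg (by omega)
    · intro x hx
      rcases le_or_gt k x with h | h
      · exact ⟨x - k, by simp; omega⟩
      · simp [Function.mem_support, if_pos h] at hx

/-- measurable composition over ℕ -/
lemma measurable_comp_nat {Ω : Type*} {m : MeasurableSpace Ω} {u : Ω → ℕ} {v : ℕ → Ω → ℕ}
    (hu : Measurable[m] u) (hv : ∀ j, Measurable[m] (v j)) :
    Measurable[m] (fun ω => v (u ω) ω) := by
  have key : ∀ y : ℕ, MeasurableSet[m] ((fun ω => v (u ω) ω) ⁻¹' {y}) := by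
    intro y
    have : (fun ω => v (u ω) ω) ⁻¹' {y} = ⋃ j : ℕ, (u ⁻¹' {j}) ∩ ((v j) ⁻¹' {y}) := by
      ext ω
      simp only [Set.mem_preimage, Set.mem_singleton_iff, Set.mem_iUnion, Set.mem_inter_iff]
      constructor
      · intro h; exact ⟨u ω, rfl, h⟩
      · rintro ⟨j, hj, h⟩; rw [hj]; exact h
    rw [this]
    exact MeasurableSet.iUnion fun j =>
      (hu (MeasurableSet.singleton j)).inter (hv j (MeasurableSet.singleton y))
  exact measurable_to_countable' key

variable {Ω : Type*}

/-- indicator of `i ∈ Icc 1 (Z n ω)` as an `ℝ≥0∞`-valued function -/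
noncomputable def Ind (Z : ℕ → Ω → ℕ) (i n : ℕ) (ω : Ω) : ℝ≥0∞ :=
  if i ∈ Finset.Icc 1 (Z n ω) then 1 else 0

lemma ind_mul (Z : ℕ → Ω → ℕ) (i n : ℕ) (ω : Ω) (c : ℝ≥0∞) :
    Ind Z i n ω * c = if i ∈ Finset.Icc 1 (Z n ω) then c else 0 := by
  unfold Ind; split <;> simp

lemma ind_sq (Z : ℕ → Ω → ℕ) (i n : ℕ) (ω : Ω) :
    Ind Z i n ω * Ind Z i n ω = Ind Z i n ω := by
  unfold Ind; split <;> simp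

lemma tsum_ind (Z : ℕ → Ω → ℕ) (n : ℕ) (ω : Ω) :
    ∑' i, Ind Z i n ω = (Z n ω : ℝ≥0∞) := by
  unfold Ind
  rw [tsum_eq_sum (s := Finset.Icc 1 (Z n ω)) (fun b hb => if_neg hb)]
  rw [Finset.sum_congr rfl (fun i hi => if_pos hi), Finset.sum_const, Nat.card_Icc]
  simp

lemma cast_Z_succ {X : ℕ → ℕ → Ω → ℕ} {Z : ℕ → Ω → ℕ}
    (hZrec : ∀ n ω, Z (n + 1) ω = ∑ i ∈ Finset.Icc 1 (Z n ω), X (n + 1) i ω) (n : ℕ) (ω : Ω) :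
    (Z (n + 1) ω : ℝ≥0∞) = ∑' i, Ind Z i n ω * (X (n + 1) i ω : ℝ≥0∞) := by
  rw [hZrec n ω, Nat.cast_sum]
  have h1 : ∑' i, Ind Z i n ω * (X (n + 1) i ω : ℝ≥0∞)
      = ∑' i, if i ∈ Finset.Icc 1 (Z n ω) then (X (n + 1) i ω : ℝ≥0∞) else 0 :=
    tsum_congr fun i => ind_mul Z i n ω _
  have h2 : (∑' i, if i ∈ Finset.Icc 1 (Z n ω) then (X (n + 1) i ω : ℝ≥0∞) else 0)
      = ∑ i ∈ Finset.Icc 1 (Z n ω), if i ∈ Finset.Icc 1 (Z n ω) then (X (n + 1) i ω : ℝ≥0∞) else 0 :=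
    tsum_eq_sum fun b hb => if_neg hb
  rw [h1, h2]
  exact Finset.sum_congr rfl fun i hi => (if_pos hi).symm

end GW

/-- **Second moment of the total progeny via second moments of generations.**
For a Galton–Watson branching process whose offspring law has mean `μ < 1` and finite
second moment `m₂ = E[X²] < ∞`, the second moment of the total progeny satisfies
`E[T²] = ((1 + μ)/(1 − μ)) · ∑ₙ E[Zₙ²]`, and this sum is finite. -/
theorem second_moment_total_progeny_via_generations
    {Ω : Type*} [MeasurableSpace Ω] (P : Measure Ω) [IsProbabilityMeasure P]
    (X : ℕ → ℕ → Ω → ℕ)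
    (hXmeas : ∀ n i, Measurable (X n i))
    (hXindep : iIndepFun (fun p : ℕ × ℕ => X p.1 p.2) P)
    (hXident : ∀ n i, IdentDistrib (X n i) (X 1 1) P P)
    (Z : ℕ → Ω → ℕ)
    (hZ0 : ∀ ω, Z 0 ω = 1)
    (hZrec : ∀ n ω, Z (n + 1) ω = ∑ i ∈ Finset.Icc 1 (Z n ω), X (n + 1) i ω)
    (μ m₂ : ℝ) (hμ0 : 0 ≤ μ) (hm₂0 : 0 ≤ m₂)
    (hμ : ∫⁻ ω, (X 1 1 ω : ℝ≥0∞) ∂P = ENNReal.ofReal μ)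
    (hm₂ : ∫⁻ ω, (X 1 1 ω : ℝ≥0∞) ^ 2 ∂P = ENNReal.ofReal m₂)
    (hμ1 : μ < 1) :
    (∑' n, ∫⁻ ω, ((Z n ω : ℝ≥0∞)) ^ 2 ∂P) ≠ ⊤ ∧
    ∫⁻ ω, (∑' n, (Z n ω : ℝ≥0∞)) ^ 2 ∂P
      = ENNReal.ofReal ((1 + μ) / (1 - μ)) * ∑' n, ∫⁻ ω, ((Z n ω : ℝ≥0∞)) ^ 2 ∂P := by
  classical
  set s : ℕ × ℕ → MeasurableSpace Ω :=
    fun p => MeasurableSpace.comap (fun ω => X p.1 p.2 ω) inferInstance with hs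
  have h_le : ∀ p, s p ≤ ‹MeasurableSpace Ω› := fun p => (hXmeas p.1 p.2).comap_le
  set past : ℕ → MeasurableSpace Ω := fun n => ⨆ p ∈ {q : ℕ × ℕ | q.1 ≤ n}, s p with hpast
  set fut : ℕ → MeasurableSpace Ω := fun n => ⨆ p ∈ {q : ℕ × ℕ | q.1 ≤ n}ᶜ, s p with hfut
  have hpast_le : ∀ n, past n ≤ ‹MeasurableSpace Ω› := fun n => iSup₂_le fun p _ => h_le p
  have hfut_le : ∀ n, fut n ≤ ‹MeasurableSpace Ω› := fun n => iSup₂_le fun p _ => h_le p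
  have hIndep : ∀ n, Indep (fut n) (past n) P := fun n =>
    (indep_biSup_compl h_le hXindep.iIndep _).symm
  have hXfut : ∀ n i, Measurable[fut n] (X (n + 1) i) := by
    intro n i
    have h1 : Measurable[s (n + 1, i)] (X (n + 1) i) := Measurable.of_comap_le le_rfl
    exact h1.mono (le_biSup (f := fun p => s p) (by simp : ((n+1, i) : ℕ × ℕ) ∈ _)) le_rfl
  have hZpast : ∀ n m, m ≤ n → Measurable[past n] (Z m) := by
    intro n m
    induction m with
    | zero => intro _
              have : Z 0 = fun _ => 1 := funext hZ0
              rw [this]; exact measurable_const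
    | succ m ih =>
      intro hm
      have hZm := ih (Nat.le_of_succ_le hm)
      have hv : ∀ j : ℕ, Measurable[past n] (fun ω => ∑ i ∈ Finset.Icc 1 j, X (m + 1) i ω) := by
        intro j
        apply Finset.measurable_sum
        intro i _
        have h1 : Measurable[s (m + 1, i)] (X (m + 1) i) := Measurable.of_comap_le le_rfl
        exact h1.mono (le_biSup (f := fun p => s p)
          (by simpa using hm : ((m+1, i) : ℕ × ℕ) ∈ {q : ℕ × ℕ | q.1 ≤ n})) le_rfl
      have : Z (m + 1) = fun ω => (fun j ω' => ∑ i ∈ Finset.Icc 1 j, X (m + 1) i ω') (Z m ω) ω :=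
        funext fun ω => hZrec m ω
      rw [this]
      exact GW.measurable_comp_nat hZm hv
  have hZmeas : ∀ n, Measurable (Z n) := fun n => (hZpast n n le_rfl).mono (hpast_le n) le_rfl
  -- casts
  have hcast : Measurable (fun k : ℕ => (k : ℝ≥0∞)) := measurable_from_top
  have hcast2 : Measurable (fun k : ℕ => (k : ℝ≥0∞) ^ 2) := measurable_from_top
  have hZc : ∀ n, Measurable (fun ω => (Z n ω : ℝ≥0∞)) := fun n => hcast.comp (hZmeas n)
  have hXc : ∀ n i, Measurable (fun ω => (X n i ω : ℝ≥0∞)) := fun n i => hcast.comp (hXmeas n i)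
  -- the indicator: measurability
  have hIpast : ∀ n i, Measurable[past n] (GW.Ind Z i n) := by
    intro n i
    have hset : MeasurableSet[past n] {ω | i ∈ Finset.Icc 1 (Z n ω)} := by
      have : {ω | i ∈ Finset.Icc 1 (Z n ω)} = (Z n) ⁻¹' {j | i ∈ Finset.Icc 1 j} := rfl
      rw [this]
      exact hZpast n n le_rfl trivial
    exact Measurable.ite hset measurable_const measurable_const
  have hImeas : ∀ n i, Measurable (GW.Ind Z i n) := fun n i =>
    (hIpast n i).mono (hpast_le n) le_rfl
  -- product splitting via independence
  have hsplit : ∀ n (F G : Ω → ℝ≥0∞), Measurable[fut n] F → Measurable[past n] G →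
      ∫⁻ ω, F ω * G ω ∂P = (∫⁻ ω, F ω ∂P) * ∫⁻ ω, G ω ∂P := fun n F G hF hG =>
    lintegral_mul_eq_lintegral_mul_lintegral_of_independent_measurableSpace
      (hfut_le n) (hpast_le n) (hIndep n) hF hG
  -- moments of X
  have hXlint : ∀ n i, ∫⁻ ω, (X n i ω : ℝ≥0∞) ∂P = ENNReal.ofReal μ := fun n i =>
    (((hXident n i).comp hcast).lintegral_eq).trans hμ
  have hX2lint : ∀ n i, ∫⁻ ω, (X n i ω : ℝ≥0∞) ^ 2 ∂P = ENNReal.ofReal m₂ := fun n i =>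
    (((hXident n i).comp hcast2).lintegral_eq).trans hm₂
  have hXfutc : ∀ n i, Measurable[fut n] (fun ω => (X (n + 1) i ω : ℝ≥0∞)) := fun n i =>
    hcast.comp (hXfut n i)
  -- shorthand notation
  set μ' : ℝ≥0∞ := ENNReal.ofReal μ with hμ'
  set e : ℕ → ℝ≥0∞ := fun n => ∫⁻ ω, (Z n ω : ℝ≥0∞) ^ 2 ∂P with he
  set a : ℕ → ℝ≥0∞ := fun n => ∫⁻ ω, (Z n ω : ℝ≥0∞) ∂P with ha
  set c : ℕ → ℕ → ℝ≥0∞ := fun m n => ∫⁻ ω, (Z m ω : ℝ≥0∞) * (Z n ω : ℝ≥0∞) ∂P with hc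
  -- Lemma A : cross moment recursion
  have hA : ∀ n m, m ≤ n → c (n + 1) m = μ' * c n m := by
    intro n m hm
    have key : ∀ ω, (Z (n+1) ω : ℝ≥0∞) * (Z m ω : ℝ≥0∞)
        = ∑' i, (X (n + 1) i ω : ℝ≥0∞) * (GW.Ind Z i n ω * (Z m ω : ℝ≥0∞)) := by
      intro ω
      rw [GW.cast_Z_succ hZrec n ω, ← ENNReal.tsum_mul_right]
      exact tsum_congr fun i => by ring
    have step1 : c (n + 1) m = ∑' i, ∫⁻ ω,
        (X (n + 1) i ω : ℝ≥0∞) * (GW.Ind Z i n ω * (Z m ω : ℝ≥0∞)) ∂P := by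
      rw [hc]
      simp only []
      rw [lintegral_congr key]
      exact lintegral_tsum fun i =>
        ((hXc (n+1) i).mul ((hImeas n i).mul (hZc m))).aemeasurable
    have hZcp : Measurable[past n] (fun ω => (Z m ω : ℝ≥0∞)) := hcast.comp (hZpast n m hm)
    have step2 : ∀ i : ℕ, ∫⁻ ω, (X (n + 1) i ω : ℝ≥0∞) * (GW.Ind Z i n ω * (Z m ω : ℝ≥0∞)) ∂P
        = μ' * ∫⁻ ω, GW.Ind Z i n ω * (Z m ω : ℝ≥0∞) ∂P := by
      intro i
      rw [hsplit n (fun ω => (X (n + 1) i ω : ℝ≥0∞)) (fun ω => GW.Ind Z i n ω * (Z m ω : ℝ≥0∞)) (hXfutc n i) ((hIpast n i).mul hZcp), hXlint]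
    have step3 : c n m = ∫⁻ ω, (∑' i, GW.Ind Z i n ω * (Z m ω : ℝ≥0∞)) ∂P := by
      rw [hc]; simp only []
      exact lintegral_congr fun ω => by
        rw [ENNReal.tsum_mul_right, GW.tsum_ind]
    rw [step1, tsum_congr step2, ENNReal.tsum_mul_left, step3,
      lintegral_tsum (f := fun i ω => GW.Ind Z i n ω * (Z m ω : ℝ≥0∞)) fun i => ((hImeas n i).mul (hZc m)).aemeasurable]
  -- mean recursion: a n = μ'^n
  have hZm0 : ∀ k, c k 0 = a k := by
    intro k; rw [hc, ha]; simp only []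
    exact lintegral_congr fun ω => by rw [hZ0]; norm_num
  have ha0 : a 0 = 1 := by
    rw [ha]; simp only []
    have h0 : ∀ ω, (Z 0 ω : ℝ≥0∞) = 1 := fun ω => by rw [hZ0]; norm_num
    rw [lintegral_congr h0, lintegral_one, measure_univ]
  have haN : ∀ n, a n = μ' ^ n := by
    intro n; induction n with
    | zero => simpa using ha0
    | succ n ih =>
      have h1 := hA n 0 (Nat.zero_le n)
      rw [hZm0, hZm0] at h1
      rw [h1, ih, pow_succ]; ring
  have hsymm : ∀ p q, c p q = c q p := fun p q => by
    rw [hc]; simp only []; exact lintegral_congr fun ω => mul_comm _ _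
  -- cross moments
  have hcc : ∀ m k, c m (m + k) = μ' ^ k * e m := by
    intro m k; induction k with
    | zero =>
      rw [Nat.add_zero, pow_zero, one_mul, hc, he]; simp only []
      exact lintegral_congr fun ω => (pow_two _).symm
    | succ k ih =>
      have hadd : m + (k + 1) = (m + k) + 1 := by omega
      rw [hadd, hsymm, hA (m + k) m (Nat.le_add_right m k), hsymm, ih, pow_succ]
      ring
  -- second moment bound
  have hB : ∀ n, e (n + 1) ≤ μ' * μ' * e n + ENNReal.ofReal m₂ * a n := by
    intro n
    have key : ∀ ω, (Z (n+1) ω : ℝ≥0∞) ^ 2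
        = ∑' (i : ℕ), ∑' (j : ℕ), ((X (n+1) i ω : ℝ≥0∞) * (X (n+1) j ω : ℝ≥0∞))
            * (GW.Ind Z i n ω * GW.Ind Z j n ω) := by
      intro ω
      rw [pow_two, GW.cast_Z_succ hZrec n ω, ← ENNReal.tsum_mul_right]
      refine tsum_congr fun i => ?_
      rw [← ENNReal.tsum_mul_left]
      exact tsum_congr fun j => by ring
    have meas1 : ∀ i j : ℕ, Measurable (fun ω => ((X (n+1) i ω : ℝ≥0∞) * (X (n+1) j ω : ℝ≥0∞))
            * (GW.Ind Z i n ω * GW.Ind Z j n ω)) := fun i j =>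
      ((hXc _ i).mul (hXc _ j)).mul ((hImeas n i).mul (hImeas n j))
    have step1 : e (n + 1) = ∑' (i : ℕ), ∑' (j : ℕ),
        ∫⁻ ω, ((X (n+1) i ω : ℝ≥0∞) * (X (n+1) j ω : ℝ≥0∞))
            * (GW.Ind Z i n ω * GW.Ind Z j n ω) ∂P := by
      rw [he]; simp only []
      rw [lintegral_congr key, lintegral_tsum (fun i => Measurable.aemeasurable
        (Measurable.ennreal_tsum fun j => meas1 i j))]
      exact tsum_congr fun i => lintegral_tsum fun j => (meas1 i j).aemeasurable
    have term : ∀ i j : ℕ, ∫⁻ ω, ((X (n+1) i ω : ℝ≥0∞) * (X (n+1) j ω : ℝ≥0∞))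
            * (GW.Ind Z i n ω * GW.Ind Z j n ω) ∂P
        ≤ μ' * μ' * ∫⁻ ω, GW.Ind Z i n ω * GW.Ind Z j n ω ∂P
          + (if j = i then ENNReal.ofReal m₂ * ∫⁻ ω, GW.Ind Z i n ω ∂P else 0) := by
      intro i j
      have hG : Measurable[past n] (fun ω => GW.Ind Z i n ω * GW.Ind Z j n ω) :=
        (hIpast n i).mul (hIpast n j)
      have hF : Measurable[fut n] (fun ω => (X (n+1) i ω : ℝ≥0∞) * (X (n+1) j ω : ℝ≥0∞)) :=
        (hXfutc n i).mul (hXfutc n j)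
      rw [hsplit n _ _ hF hG]
      rcases eq_or_ne j i with rfl | hij
      · rw [if_pos rfl]
        have h2 : ∫⁻ ω, (X (n+1) j ω : ℝ≥0∞) * (X (n+1) j ω : ℝ≥0∞) ∂P
            = ENNReal.ofReal m₂ := by
          rw [← hX2lint (n+1) j]; exact lintegral_congr fun ω => (pow_two _).symm
        have h3 : ∫⁻ ω, GW.Ind Z j n ω * GW.Ind Z j n ω ∂P = ∫⁻ ω, GW.Ind Z j n ω ∂P :=
          lintegral_congr fun ω => GW.ind_sq Z j n ω
        rw [h2, h3]
        exact le_add_self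
      · have hne : ((n+1, i) : ℕ × ℕ) ≠ (n+1, j) := by
          simp only [ne_eq, Prod.mk.injEq, not_and]
          exact fun _ => hij.symm
        have hind : IndepFun (X (n+1) i) (X (n+1) j) P := hXindep.indepFun hne
        have hindc : IndepFun (fun ω => (X (n+1) i ω : ℝ≥0∞))
            (fun ω => (X (n+1) j ω : ℝ≥0∞)) P := hind.comp hcast hcast
        have h2 : ∫⁻ ω, (X (n+1) i ω : ℝ≥0∞) * (X (n+1) j ω : ℝ≥0∞) ∂P = μ' * μ' := by
          rw [lintegral_mul_eq_lintegral_mul_lintegral_of_indepFun''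
            (hXc (n+1) i).aemeasurable (hXc (n+1) j).aemeasurable hindc,
            hXlint, hXlint]
        rw [h2]
        exact le_self_add
    have hIZ : ∀ i, ∫⁻ ω, GW.Ind Z i n ω * (Z n ω : ℝ≥0∞) ∂P
        = ∑' (j : ℕ), ∫⁻ ω, GW.Ind Z i n ω * GW.Ind Z j n ω ∂P := by
      intro i
      rw [← lintegral_tsum (f := fun j ω => GW.Ind Z i n ω * GW.Ind Z j n ω) (fun j => ((hImeas n i).mul (hImeas n j)).aemeasurable)]
      exact lintegral_congr fun ω => by rw [ENNReal.tsum_mul_left, GW.tsum_ind]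
    have sum_q : (∑' (i : ℕ), ∑' (j : ℕ), ∫⁻ ω, GW.Ind Z i n ω * GW.Ind Z j n ω ∂P)
        = e n := by
      rw [tsum_congr (fun i => (hIZ i).symm),
        ← lintegral_tsum (f := fun i ω => GW.Ind Z i n ω * (Z n ω : ℝ≥0∞)) (fun i => ((hImeas n i).mul (hZc n)).aemeasurable), he]
      simp only []
      exact lintegral_congr fun ω => by
        rw [ENNReal.tsum_mul_right, GW.tsum_ind, pow_two]
    have sum_diag : (∑' (i : ℕ), ∫⁻ ω, GW.Ind Z i n ω ∂P) = a n := by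
      rw [← lintegral_tsum (fun i => (hImeas n i).aemeasurable), ha]
      simp only []
      exact lintegral_congr fun ω => GW.tsum_ind Z n ω
    calc e (n + 1) = _ := step1
      _ ≤ ∑' (i : ℕ), ∑' (j : ℕ),
            (μ' * μ' * ∫⁻ ω, GW.Ind Z i n ω * GW.Ind Z j n ω ∂P
              + (if j = i then ENNReal.ofReal m₂ * ∫⁻ ω, GW.Ind Z i n ω ∂P else 0)) :=
        ENNReal.tsum_le_tsum fun i => ENNReal.tsum_le_tsum fun j => term i j
      _ = ∑' (i : ℕ), (μ' * μ' * ∑' (j : ℕ), (∫⁻ ω, GW.Ind Z i n ω * GW.Ind Z j n ω ∂P)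
              + ENNReal.ofReal m₂ * ∫⁻ ω, GW.Ind Z i n ω ∂P) := by
        refine tsum_congr fun i => ?_
        rw [ENNReal.tsum_add, ENNReal.tsum_mul_left, tsum_ite_eq]
      _ = μ' * μ' * (∑' (i : ℕ), ∑' (j : ℕ), ∫⁻ ω, GW.Ind Z i n ω * GW.Ind Z j n ω ∂P)
              + ENNReal.ofReal m₂ * ∑' (i : ℕ), ∫⁻ ω, GW.Ind Z i n ω ∂P := by
        rw [ENNReal.tsum_add, ENNReal.tsum_mul_left, ENNReal.tsum_mul_left]
      _ = μ' * μ' * e n + ENNReal.ofReal m₂ * a n := by rw [sum_q, sum_diag]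
  -- geometric bound on e
  set r : ℝ := (1 + μ) / 2 with hrdef
  have hr0 : 0 ≤ r := by rw [hrdef]; linarith
  have hrlt : r < 1 := by rw [hrdef]; linarith
  have hμr : μ ≤ r := by rw [hrdef]; linarith
  set K : ℝ := max 1 (2 * m₂ / (1 - μ)) with hKdef
  have hK1 : (1 : ℝ) ≤ K := le_max_left _ _
  have hK0 : (0 : ℝ) ≤ K := le_trans zero_le_one hK1
  have hKm : 2 * m₂ / (1 - μ) ≤ K := le_max_right _ _
  have hm₂K : 2 * m₂ ≤ K * (1 - μ) := by
    rw [div_le_iff₀ (by linarith : (0:ℝ) < 1 - μ)] at hKm; linarith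
  have hebound : ∀ n, e n ≤ ENNReal.ofReal (K * r ^ n) := by
    intro n; induction n with
    | zero =>
      have he0 : e 0 = 1 := by
        rw [he]; simp only []
        have h0 : ∀ ω, (Z 0 ω : ℝ≥0∞) ^ 2 = 1 := fun ω => by rw [hZ0]; norm_num
        rw [lintegral_congr h0, lintegral_one, measure_univ]
      rw [he0, pow_zero, mul_one]
      exact ENNReal.one_le_ofReal.mpr hK1
    | succ n ih =>
      refine le_trans (hB n) ?_
      have han : a n ≤ ENNReal.ofReal (r ^ n) := by
        rw [haN, hμ', ← ENNReal.ofReal_pow hμ0]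
        exact ENNReal.ofReal_le_ofReal (pow_le_pow_left₀ hμ0 hμr n)
      have h1 : μ' * μ' * e n + ENNReal.ofReal m₂ * a n
          ≤ ENNReal.ofReal (μ * μ * (K * r ^ n) + m₂ * r ^ n) := by
        rw [ENNReal.ofReal_add (by positivity) (by positivity),
          ENNReal.ofReal_mul (by positivity), ENNReal.ofReal_mul (by positivity),
          ENNReal.ofReal_mul hm₂0]
        refine add_le_add ?_ (mul_le_mul_right han _)
        · rw [hμ']
          exact mul_le_mul_right ih _
      refine le_trans h1 (ENNReal.ofReal_le_ofReal ?_)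
      have hpow : (0:ℝ) ≤ r ^ n := by positivity
      have hrs : r ^ (n + 1) = r ^ n * r := pow_succ r n
      nlinarith [mul_nonneg hK0 hpow, mul_nonneg hμ0 hpow, mul_nonneg hm₂0 hpow,
        mul_nonneg (mul_nonneg hμ0 hμ0) (mul_nonneg hK0 hpow)]
  have hEfin : (∑' n, e n) ≠ ⊤ := by
    have hle : (∑' n, e n) ≤ ∑' n, ENNReal.ofReal K * ENNReal.ofReal r ^ n := by
      refine ENNReal.tsum_le_tsum fun n => ?_
      rw [← ENNReal.ofReal_pow hr0, ← ENNReal.ofReal_mul hK0]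
      exact hebound n
    rw [ENNReal.tsum_mul_left, ENNReal.tsum_geometric] at hle
    refine ne_top_of_le_ne_top ?_ hle
    refine ENNReal.mul_ne_top ENNReal.ofReal_ne_top ?_
    rw [Ne, ENNReal.inv_eq_top]
    have hrl : ENNReal.ofReal r < 1 := by
      rw [← ENNReal.ofReal_one]
      exact ENNReal.ofReal_lt_ofReal_iff_of_nonneg hr0 |>.mpr hrlt
    exact (tsub_pos_of_lt hrl).ne'
  refine ⟨hEfin, ?_⟩
  -- final computation
  have hTsq : ∀ ω, (∑' n, (Z n ω : ℝ≥0∞)) ^ 2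
      = ∑' (m : ℕ), ∑' (n : ℕ), (Z m ω : ℝ≥0∞) * (Z n ω : ℝ≥0∞) := by
    intro ω
    rw [pow_two, ← ENNReal.tsum_mul_right]
    exact tsum_congr fun m => by rw [← ENNReal.tsum_mul_left]
  have step1 : ∫⁻ ω, (∑' n, (Z n ω : ℝ≥0∞)) ^ 2 ∂P = ∑' (m : ℕ), ∑' (n : ℕ), c m n := by
    rw [lintegral_congr hTsq, lintegral_tsum (f := fun m ω => ∑' (n : ℕ), (Z m ω : ℝ≥0∞) * (Z n ω : ℝ≥0∞)) (fun m => Measurable.aemeasurable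
      (Measurable.ennreal_tsum fun n => (hZc m).mul (hZc n)))]
    exact tsum_congr fun m => lintegral_tsum (f := fun n ω => (Z m ω : ℝ≥0∞) * (Z n ω : ℝ≥0∞)) fun n => ((hZc m).mul (hZc n)).aemeasurable
  set ν : ℝ≥0∞ := (1 - μ')⁻¹ with hν
  have inner : ∀ m : ℕ, (∑' (n : ℕ), c m n) = (∑ i ∈ Finset.range m, c m i) + ν * e m := by
    intro m
    rw [GW.tsum_shift (fun n => c m n) m]
    congr 1
    have h1 : ∀ k : ℕ, c m (k + m) = μ' ^ k * e m := fun k => by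
      rw [add_comm k m]; exact hcc m k
    rw [tsum_congr h1, ENNReal.tsum_mul_right, ENNReal.tsum_geometric]
  have hD : (∑' (m : ℕ), ∑ i ∈ Finset.range m, c m i) = μ' * ν * ∑' n, e n := by
    have h1 : ∀ m : ℕ, (∑ i ∈ Finset.range m, c m i)
        = ∑' (i : ℕ), if i < m then c m i else 0 := by
      intro m
      rw [tsum_eq_sum (s := Finset.range m) (fun b hb => if_neg (by simpa using hb))]
      exact Finset.sum_congr rfl fun i hi => (if_pos (by simpa using hi)).symm
    rw [tsum_congr h1, ENNReal.tsum_comm]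
    have h2 : ∀ i : ℕ, (∑' (m : ℕ), if i < m then c m i else 0) = μ' * ν * e i := by
      intro i
      rw [GW.tsum_shift (fun m => if i < m then c m i else 0) (i + 1)]
      rw [Finset.sum_eq_zero (fun m hm => if_neg (by simp at hm; omega)), zero_add]
      have h3 : ∀ k : ℕ, (if i < k + (i + 1) then c (k + (i + 1)) i else 0)
          = μ' ^ k * (μ' * e i) := by
        intro k
        rw [if_pos (by omega), hsymm]
        have hh : k + (i + 1) = i + (k + 1) := by omega
        rw [hh, hcc, pow_succ]; ring
      rw [tsum_congr h3, ENNReal.tsum_mul_right, ENNReal.tsum_geometric]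
      ring
    rw [tsum_congr h2, ENNReal.tsum_mul_left]
  have hofReal : ENNReal.ofReal ((1 + μ) / (1 - μ)) = (1 + μ') * ν := by
    rw [ENNReal.ofReal_div_of_pos (by linarith : (0:ℝ) < 1 - μ),
      ENNReal.ofReal_add zero_le_one hμ0, ENNReal.ofReal_one, ENNReal.div_eq_inv_mul,
      hν, hμ', ENNReal.ofReal_sub _ hμ0, ENNReal.ofReal_one]
    ring
  rw [step1, tsum_congr inner, ENNReal.tsum_add, hD, ENNReal.tsum_mul_left, hofReal]
  ring
end

section
/- Let δ > 0 and let N be a random variable taking values in {1, 2, …} with P(N ≥ 2) > 0 (equivalently, E[N^{−m}] < 1 for every integer m ≥ 1). Let (R_n)_{n≥0} be nonnegative random variables with R_0 = 0 and R_n ≤ R_{n+1} almost surely for all n, increasing almost surely to a limit R_∞. Suppose that for every n ≥ 1, R_n is stochastically dominated by (δN)^{-1} + N^{-2} Σ_{i=1}^{N} R_{n−1}^{(i)}, where R_{n−1}^{(1)}, R_{n−1}^{(2)}, … are i.i.d. copies of R_{n−1} that are independent of N (stochastic domination meaning P(R_n > t) ≤ P((δN)^{-1} + N^{-2} Σ_{i=1}^{N}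 R_{n−1}^{(i)} > t) for all t ≥ 0). Then E[R_∞^m] < ∞ for every integer m ≥ 1; moreover, for each m ≥ 1, sup_n E[R_n^m] ≤ ( Σ_{k=0}^{m−1} binom(m,k) δ^{k−m} E[N^{−m}] E[R_∞^k] ) / (1 − E[N^{−m}]). -/
open MeasureTheory ProbabilityTheory
open scoped ENNReal NNReal


lemma aux_ae_nonneg {Ω : Type*} [MeasurableSpace Ω] {P : Measure Ω}
    {f g : Ω → ℝ} (hident : IdentDistrib f g P P) (hg : ∀ ω, 0 ≤ g ω) :
    ∀ᵐ ω ∂P, 0 ≤ f ω := by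
  have h0 : P (f ⁻¹' Set.Iio 0) = P (g ⁻¹' Set.Iio 0) :=
    hident.measure_mem_eq measurableSet_Iio
  have h1 : g ⁻¹' Set.Iio 0 = ∅ :=
    Set.eq_empty_iff_forall_notMem.mpr fun ω h => absurd h (not_lt.mpr (hg ω))
  rw [ae_iff]
  have h2 : {ω | ¬ 0 ≤ f ω} = f ⁻¹' Set.Iio 0 := by
    ext ω; simp [not_le]
  rw [h2, h0, h1, measure_empty]

lemma aux_layercake_mono {Ω : Type*} [MeasurableSpace Ω] (P : Measure Ω)
    [IsProbabilityMeasure P]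
    {X Y : Ω → ℝ} (hX : Measurable X) (hY : Measurable Y)
    (hXnn : ∀ᵐ ω ∂P, 0 ≤ X ω) (hYnn : ∀ᵐ ω ∂P, 0 ≤ Y ω)
    (hdom : ∀ t : ℝ, 0 ≤ t → P {ω | t < X ω} ≤ P {ω | t < Y ω})
    {m : ℕ} (hm : 1 ≤ m) :
    ∫⁻ ω, ENNReal.ofReal (X ω ^ m) ∂P ≤ ∫⁻ ω, ENNReal.ofReal (Y ω ^ m) ∂P := by
  have hm0 : (m : ℝ) ≠ 0 := Nat.cast_ne_zero.mpr (by omega)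
  have key : ∀ (Z : Ω → ℝ), (∀ᵐ ω ∂P, 0 ≤ Z ω) → ∀ t : ℝ, 0 < t →
      P {ω | t < Z ω ^ m} = P {ω | t ^ (m : ℝ)⁻¹ < Z ω} := by
    intro Z hZ t ht
    apply measure_congr
    rw [Filter.eventuallyEq_set]
    filter_upwards [hZ] with ω hω
    show _ ↔ _
    constructor
    · intro h
      have h1 : t ^ (m : ℝ)⁻¹ < (Z ω ^ m) ^ (m : ℝ)⁻¹ :=
        Real.rpow_lt_rpow ht.le h (by positivity)
      rwa [← Real.rpow_natCast (Z ω) m, ← Real.rpow_mul hω,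
        mul_inv_cancel₀ hm0, Real.rpow_one] at h1
    · intro h
      have h1 : (t ^ (m : ℝ)⁻¹) ^ m < Z ω ^ m :=
        pow_lt_pow_left₀ h (Real.rpow_nonneg ht.le _) (by omega)
      rwa [← Real.rpow_natCast (t ^ (m : ℝ)⁻¹) m, ← Real.rpow_mul ht.le,
        inv_mul_cancel₀ hm0, Real.rpow_one] at h1
  rw [MeasureTheory.lintegral_eq_lintegral_meas_lt P (hXnn.mono fun ω h => pow_nonneg h m)
      ((hX.pow_const m).aemeasurable),
    MeasureTheory.lintegral_eq_lintegral_meas_lt P (hYnn.mono fun ω h => pow_nonneg h m)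
      ((hY.pow_const m).aemeasurable)]
  refine lintegral_mono_ae ?_
  rw [MeasureTheory.ae_restrict_iff' measurableSet_Ioi]
  refine Filter.Eventually.of_forall fun t ht => ?_
  have ht' : (0:ℝ) < t := ht
  rw [key X hXnn t ht', key Y hYnn t ht']
  exact hdom _ (Real.rpow_nonneg ht'.le _)

lemma aux_ptwise (δ : ℝ) (hδ : 0 < δ) (m j : ℕ) (hj : 1 ≤ j) (x : ℕ → ℝ)
    (hx : ∀ i, 0 ≤ x i) :
    ((δ * (j : ℝ))⁻¹ + ((j : ℝ) ^ 2)⁻¹ * ∑ i ∈ Finset.Icc 1 j, x i) ^ m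
      ≤ ∑ k ∈ Finset.range (m + 1),
          (m.choose k : ℝ) * (δ ^ (m - k))⁻¹
            * (((j : ℝ) ^ (m + 1))⁻¹ * ∑ i ∈ Finset.Icc 1 j, x i ^ k) := by
  have hj0 : (0 : ℝ) < j := by exact_mod_cast Nat.lt_of_lt_of_le Nat.zero_lt_one hj
  have card_eq : (Finset.Icc 1 j).card = j := by simp [Nat.card_Icc]
  rw [add_comm, add_pow]
  refine Finset.sum_le_sum fun k hk => ?_
  rw [Finset.mem_range, Nat.lt_succ_iff] at hk
  set T := ∑ i ∈ Finset.Icc 1 j, x i with hTdef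
  set s := ∑ i ∈ Finset.Icc 1 j, x i ^ k with hsdef
  have hT : 0 ≤ T := Finset.sum_nonneg fun i _ => hx i
  have hs : 0 ≤ s := Finset.sum_nonneg fun i _ => pow_nonneg (hx i) k
  have Hk : T ^ k * (j : ℝ) ≤ (j : ℝ) ^ k * s := by
    rcases Nat.eq_zero_or_pos k with rfl | hk1
    · simp [hsdef, Finset.sum_const, card_eq]
    · obtain ⟨p, rfl⟩ : ∃ p, k = p + 1 := ⟨k - 1, by omega⟩
      have h := pow_sum_div_card_le_sum_pow (s := Finset.Icc 1 j) (f := x)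
        (fun i _ => hx i) p
      rw [card_eq, div_le_iff₀ (by positivity)] at h
      calc T ^ (p + 1) * (j : ℝ) ≤ (s * (j : ℝ) ^ p) * j :=
            mul_le_mul_of_nonneg_right h hj0.le
        _ = (j : ℝ) ^ (p + 1) * s := by ring
  obtain ⟨p, rfl⟩ : ∃ p, m = p + k := ⟨m - k, by omega⟩
  have hmk : p + k - k = p := by omega
  rw [hmk]
  have hch : (0 : ℝ) ≤ ((p + k).choose k : ℝ) := by positivity
  have e1 : (((j : ℝ) ^ 2)⁻¹ * T) ^ k * ((δ * (j : ℝ))⁻¹) ^ p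
      = (δ ^ p)⁻¹ * (((j : ℝ) ^ (p + 2 * k + 1))⁻¹ * (T ^ k * (j : ℝ))) := by
    have hjj : (j : ℝ)⁻¹ * j = 1 := inv_mul_cancel₀ hj0.ne'
    rw [pow_succ, mul_inv]
    linear_combination (-(δ ^ p)⁻¹ * ((j : ℝ) ^ (p + 2 * k))⁻¹ * T ^ k) * hjj
  have e2 : (δ ^ p)⁻¹ * (((j : ℝ) ^ (p + k + 1))⁻¹ * s)
      = (δ ^ p)⁻¹ * (((j : ℝ) ^ (p + 2 * k + 1))⁻¹ * ((j : ℝ) ^ k * s)) := by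
    field_simp
    ring
  calc (((j : ℝ) ^ 2)⁻¹ * T) ^ k * ((δ * (j : ℝ))⁻¹) ^ p * ((p + k).choose k : ℝ)
      = ((p + k).choose k : ℝ)
          * ((δ ^ p)⁻¹ * (((j : ℝ) ^ (p + 2 * k + 1))⁻¹ * (T ^ k * (j : ℝ)))) := by
        rw [e1]; ring
    _ ≤ ((p + k).choose k : ℝ)
          * ((δ ^ p)⁻¹ * (((j : ℝ) ^ (p + 2 * k + 1))⁻¹ * ((j : ℝ) ^ k * s))) := by
        refine mul_le_mul_of_nonneg_left ?_ hch
        refine mul_le_mul_of_nonneg_left ?_ (by positivity)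
        exact mul_le_mul_of_nonneg_left Hk (by positivity)
    _ = ((p + k).choose k : ℝ) * (δ ^ p)⁻¹ * (((j : ℝ) ^ (p + k + 1))⁻¹ * s) := by
        rw [mul_assoc, ← e2]

lemma aux_sum_meas {Ω : Type*} [MeasurableSpace Ω]
    (N : Ω → ℕ) (hNmeas : Measurable N)
    (f : ℕ → Ω → ℝ) (hf : ∀ i, Measurable (f i)) :
    Measurable fun ω => ∑ i ∈ Finset.Icc 1 (N ω), f i ω := by
  have h : (fun ω => ∑ i ∈ Finset.Icc 1 (N ω), f i ω)
      = fun ω => (fun p : Ω × ℕ => ∑ i ∈ Finset.Icc 1 p.2, f i p.1) (ω, N ω) := rfl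
  rw [h]
  have hF : Measurable (fun p : Ω × ℕ => ∑ i ∈ Finset.Icc 1 p.2, f i p.1) :=
    measurable_from_prod_countable_left fun j =>
      Finset.measurable_sum (Finset.Icc 1 j) fun i _ => hf i
  exact hF.comp (measurable_id.prodMk hNmeas)

lemma aux_indep_term {Ω : Type*} [MeasurableSpace Ω] (P : Measure Ω)
    [IsProbabilityMeasure P]
    (N : Ω → ℕ) (hNmeas : Measurable N) (hN : ∀ ω, 1 ≤ N ω)
    (S' : ℕ → Ω → ℝ) (hS'meas : ∀ i, Measurable (S' i))
    (hSN : IndepFun N (fun ω i => S' i ω) P)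
    (R' : Ω → ℝ) (hR'nn : ∀ ω, 0 ≤ R' ω)
    (hident : ∀ i, IdentDistrib (S' i) R' P P)
    (hSnn : ∀ i, ∀ᵐ ω ∂P, 0 ≤ S' i ω)
    (m k : ℕ) :
    ∫⁻ ω, ENNReal.ofReal (((N ω : ℝ) ^ (m + 1))⁻¹ * ∑ i ∈ Finset.Icc 1 (N ω), S' i ω ^ k) ∂P
      = (∫⁻ ω, ENNReal.ofReal (((N ω : ℝ) ^ m)⁻¹) ∂P)
          * ∫⁻ ω, ENNReal.ofReal (R' ω ^ k) ∂P := by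
  set G : ℕ → ℕ → ℝ≥0∞ := fun i j =>
    ENNReal.ofReal (((j : ℝ) ^ (m + 1))⁻¹) * (if i ∈ Finset.Icc 1 j then 1 else 0) with hG
  have hGmeas : ∀ i, Measurable fun ω => G i (N ω) :=
    fun i => (Measurable.of_discrete (f := G i)).comp hNmeas
  have hSkmeas : ∀ i, Measurable fun ω => ENNReal.ofReal (S' i ω ^ k) :=
    fun i => ENNReal.measurable_ofReal.comp ((hS'meas i).pow_const k)
  have hpt : ∀ᵐ ω ∂P,
      ENNReal.ofReal (((N ω : ℝ) ^ (m + 1))⁻¹ * ∑ i ∈ Finset.Icc 1 (N ω), S' i ω ^ k)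
        = ∑' i, G i (N ω) * ENNReal.ofReal (S' i ω ^ k) := by
    filter_upwards [MeasureTheory.ae_all_iff.mpr hSnn] with ω hω
    have hnn : ∀ i ∈ Finset.Icc 1 (N ω), 0 ≤ S' i ω ^ k := fun i _ => pow_nonneg (hω i) k
    rw [ENNReal.ofReal_mul (by positivity), ENNReal.ofReal_sum_of_nonneg hnn]
    have hterm : ∀ i, G i (N ω) * ENNReal.ofReal (S' i ω ^ k)
        = ENNReal.ofReal (((N ω : ℝ) ^ (m + 1))⁻¹)
            * (if i ∈ Finset.Icc 1 (N ω) then ENNReal.ofReal (S' i ω ^ k) else 0) := by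
      intro i; rw [hG]; by_cases h : i ∈ Finset.Icc 1 (N ω) <;> simp [h]
    rw [tsum_congr hterm, ENNReal.tsum_mul_left,
      tsum_eq_sum (s := Finset.Icc 1 (N ω)) (fun i hi => if_neg hi)]
    congr 1
    exact Finset.sum_congr rfl fun i hi => (if_pos hi).symm
  rw [lintegral_congr_ae hpt,
    lintegral_tsum (f := fun i ω => G i (N ω) * ENNReal.ofReal (S' i ω ^ k))
      (fun i => ((hGmeas i).mul (hSkmeas i)).aemeasurable)]
  have hterm2 : ∀ i : ℕ, ∫⁻ ω, G i (N ω) * ENNReal.ofReal (S' i ω ^ k) ∂P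
      = (∫⁻ ω, G i (N ω) ∂P) * ∫⁻ ω, ENNReal.ofReal (R' ω ^ k) ∂P := by
    intro i
    have hfun : Measurable fun v : ℕ → ℝ => ENNReal.ofReal (v i ^ k) :=
      ENNReal.measurable_ofReal.comp ((measurable_pi_apply i).pow_const k)
    have hindep : IndepFun (fun ω => G i (N ω)) (fun ω => ENNReal.ofReal (S' i ω ^ k)) P :=
      hSN.comp (Measurable.of_discrete (f := G i)) hfun
    rw [lintegral_mul_eq_lintegral_mul_lintegral_of_indepFun'' (hGmeas i).aemeasurable
      (hSkmeas i).aemeasurable hindep]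
    congr 1
    exact ((hident i).comp
      (ENNReal.measurable_ofReal.comp (measurable_id.pow_const k))).lintegral_eq
  rw [tsum_congr hterm2, ENNReal.tsum_mul_right]
  congr 1
  rw [← lintegral_tsum (fun i => (hGmeas i).aemeasurable)]
  refine lintegral_congr fun ω => ?_
  have h1 : ∑' i, G i (N ω)
      = ENNReal.ofReal (((N ω : ℝ) ^ (m + 1))⁻¹)
          * ∑' i, (if i ∈ Finset.Icc 1 (N ω) then (1 : ℝ≥0∞) else 0) := by
    rw [hG]; exact ENNReal.tsum_mul_left
  rw [h1, tsum_eq_sum (s := Finset.Icc 1 (N ω)) (fun i hi => if_neg hi)]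
  have h2 : ∑ i ∈ Finset.Icc 1 (N ω), (if i ∈ Finset.Icc 1 (N ω) then (1 : ℝ≥0∞) else 0)
      = ((N ω : ℕ) : ℝ≥0∞) := by
    rw [Finset.sum_congr rfl fun i hi => if_pos hi]
    simp [Nat.card_Icc]
  rw [h2, ← ENNReal.ofReal_natCast (N ω), ← ENNReal.ofReal_mul (by positivity)]
  congr 1
  have hj0 : (0 : ℝ) < (N ω : ℝ) := by exact_mod_cast Nat.lt_of_lt_of_le Nat.zero_lt_one (hN ω)
  field_simp
  ring

/-- **Finite moments of the limit of a resistance-type recursion.**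
Let `δ > 0` and let `N` be a random variable with values in `{1, 2, …}` with
`P(N ≥ 2) > 0`. Let `(Rₙ)` be nonnegative random variables with `R₀ = 0`, increasing
almost surely to a limit `R_∞`, such that each `R_{n+1}` is stochastically dominated by
`(δN)⁻¹ + N⁻² ∑_{i=1}^N Rₙ⁽ⁱ⁾`, where the `Rₙ⁽ⁱ⁾` are i.i.d. copies of `Rₙ`
independent of `N`. Then `E[R_∞^m] < ∞` for every `m ≥ 1`, and moreover
`sup_n E[Rₙ^m] ≤ (∑_{k=0}^{m−1} binom(m,k) δ^(k−m) E[N^(−m)] E[R_∞^k]) / (1 − E[N^(−m)])`. -/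
theorem finite_moments_of_resistance_recursion
    {Ω : Type*} [MeasurableSpace Ω] (P : Measure Ω) [IsProbabilityMeasure P]
    (δ : ℝ) (hδ : 0 < δ)
    (N : Ω → ℕ) (hNmeas : Measurable N) (hN : ∀ ω, 1 ≤ N ω)
    (hN2 : 0 < P {ω | 2 ≤ N ω})
    (R : ℕ → Ω → ℝ) (hRmeas : ∀ n, Measurable (R n))
    (hR0nonneg : ∀ n ω, 0 ≤ R n ω)
    (hRzero : ∀ ω, R 0 ω = 0)
    (hRmono : ∀ n, ∀ᵐ ω ∂P, R n ω ≤ R (n + 1) ω)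
    (Rinf : Ω → ℝ) (hRinfmeas : Measurable Rinf)
    (hRlim : ∀ᵐ ω ∂P, Filter.Tendsto (fun n => R n ω) Filter.atTop (nhds (Rinf ω)))
    (S : ℕ → ℕ → Ω → ℝ) (hSmeas : ∀ n i, Measurable (S n i))
    (hSident : ∀ n i, IdentDistrib (S n i) (R n) P P)
    (hSindep : ∀ n, iIndepFun (S n) P)
    (hSN : ∀ n, IndepFun N (fun ω i => S n i ω) P)
    (hdom : ∀ n, ∀ t : ℝ, 0 ≤ t →
      P {ω | t < R (n + 1) ω}
        ≤ P {ω | t < (δ * (N ω : ℝ))⁻¹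
              + ((N ω : ℝ) ^ 2)⁻¹ * ∑ i ∈ Finset.Icc 1 (N ω), S n i ω}) :
    ∀ m : ℕ, 1 ≤ m →
      (∫⁻ ω, ENNReal.ofReal (Rinf ω ^ m) ∂P < ⊤) ∧
      ∀ n, ∫⁻ ω, ENNReal.ofReal (R n ω ^ m) ∂P
        ≤ ENNReal.ofReal
            ((∑ k ∈ Finset.range m,
                (m.choose k : ℝ) * δ ^ ((k : ℤ) - (m : ℤ))
                  * (∫ ω, ((N ω : ℝ) ^ m)⁻¹ ∂P) * ∫ ω, Rinf ω ^ k ∂P)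
              / (1 - ∫ ω, ((N ω : ℝ) ^ m)⁻¹ ∂P)) := by
  have hcast : Measurable fun ω => (N ω : ℝ) := measurable_from_top.comp hNmeas
  have hNpos : ∀ ω, (0 : ℝ) < (N ω : ℝ) := fun ω => by
    exact_mod_cast Nat.lt_of_lt_of_le Nat.zero_lt_one (hN ω)
  have hRle : ∀ n, ∀ᵐ ω ∂P, R n ω ≤ Rinf ω := by
    intro n
    filter_upwards [MeasureTheory.ae_all_iff.mpr hRmono, hRlim] with ω h1 h2
    exact (monotone_nat_of_le_succ h1).ge_of_tendsto h2 n
  have hRinfnn : ∀ᵐ ω ∂P, 0 ≤ Rinf ω := by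
    filter_upwards [hRle 0] with ω h
    rw [hRzero ω] at h; exact h
  have hSnnae : ∀ n, ∀ᵐ ω ∂P, ∀ i, 0 ≤ S n i ω := fun n =>
    MeasureTheory.ae_all_iff.mpr fun i => aux_ae_nonneg (hSident n i) (hR0nonneg n)
  have hsum_meas : ∀ n k, Measurable fun ω => ∑ i ∈ Finset.Icc 1 (N ω), S n i ω ^ k :=
    fun n k => aux_sum_meas N hNmeas _ fun i => (hSmeas n i).pow_const k
  have hAL : ∀ n k, ∫⁻ ω, ENNReal.ofReal (R n ω ^ k) ∂P
      ≤ ∫⁻ ω, ENNReal.ofReal (Rinf ω ^ k) ∂P := by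
    intro n k
    refine lintegral_mono_ae ?_
    filter_upwards [hRle n] with ω h
    exact ENNReal.ofReal_le_ofReal (pow_le_pow_left₀ (hR0nonneg n ω) h k)
  intro m
  induction m using Nat.strong_induction_on with
  | _ m IH =>
  intro hm
  -- finiteness of lower moments of Rinf
  have Lfin : ∀ k, k < m → ∫⁻ ω, ENNReal.ofReal (Rinf ω ^ k) ∂P < ⊤ := by
    intro k hk
    rcases Nat.eq_zero_or_pos k with rfl | hk1
    · simp
    · exact (IH k hk hk1).1
  set q : ℝ≥0∞ := ∫⁻ ω, ENNReal.ofReal (((N ω : ℝ) ^ m)⁻¹) ∂P with hq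
  have q_le_one : q ≤ 1 := by
    rw [hq]
    calc ∫⁻ ω, ENNReal.ofReal (((N ω : ℝ) ^ m)⁻¹) ∂P
        ≤ ∫⁻ _, 1 ∂P := by
          refine lintegral_mono fun ω => ?_
          rw [ENNReal.ofReal_le_one]
          exact inv_le_one_of_one_le₀ (one_le_pow₀ (by exact_mod_cast hN ω))
      _ = 1 := by simp
  have q_ne_top : q ≠ ⊤ := (lt_of_le_of_lt q_le_one ENNReal.one_lt_top).ne
  have hNset : MeasurableSet {ω | 2 ≤ N ω} := hNmeas measurableSet_Ici
  have q_lt_one : q < 1 := by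
    have hptw : ∀ ω, ENNReal.ofReal (((N ω : ℝ) ^ m)⁻¹)
        + Set.indicator {ω | 2 ≤ N ω} (fun _ => (2 : ℝ≥0∞)⁻¹) ω ≤ 1 := by
      intro ω
      by_cases h : ω ∈ {ω | 2 ≤ N ω}
      · rw [Set.indicator_of_mem h]
        have h2 : (2 : ℝ) ≤ (N ω : ℝ) ^ m := by
          calc (2 : ℝ) ≤ (N ω : ℝ) := by exact_mod_cast h
            _ ≤ (N ω : ℝ) ^ m := le_self_pow₀ (by exact_mod_cast hN ω) (by omega)
        have h1 : ((N ω : ℝ) ^ m)⁻¹ ≤ 2⁻¹ := by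
          apply inv_anti₀ (by norm_num) h2
        calc ENNReal.ofReal (((N ω : ℝ) ^ m)⁻¹) + 2⁻¹
            ≤ ENNReal.ofReal (2⁻¹ : ℝ) + 2⁻¹ := by
              exact add_le_add (ENNReal.ofReal_le_ofReal h1) le_rfl
          _ = 2⁻¹ + 2⁻¹ := by
              rw [ENNReal.ofReal_inv_of_pos (by norm_num)]
              norm_num
          _ = 1 := ENNReal.inv_two_add_inv_two
      · rw [Set.indicator_of_notMem h, add_zero, ENNReal.ofReal_le_one]
        exact inv_le_one_of_one_le₀ (one_le_pow₀ (by exact_mod_cast hN ω))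
    have hint : q + 2⁻¹ * P {ω | 2 ≤ N ω} ≤ 1 := by
      have h : ∫⁻ ω, (ENNReal.ofReal (((N ω : ℝ) ^ m)⁻¹)
          + Set.indicator {ω | 2 ≤ N ω} (fun _ => (2 : ℝ≥0∞)⁻¹) ω) ∂P
          ≤ ∫⁻ _, (1 : ℝ≥0∞) ∂P := lintegral_mono hptw
      rw [lintegral_add_left (f := fun ω => ENNReal.ofReal (((N ω : ℝ) ^ m)⁻¹))
          (((hcast.pow_const m).inv).ennreal_ofReal),
        lintegral_indicator_const hNset, lintegral_one, measure_univ] at h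
      exact h
    calc q < q + 2⁻¹ * P {ω | 2 ≤ N ω} :=
          ENNReal.lt_add_right q_ne_top
            (mul_ne_zero (by norm_num) (ne_of_gt hN2))
      _ ≤ 1 := hint
  have hYmeas : ∀ n, Measurable fun ω =>
      (δ * (N ω : ℝ))⁻¹ + ((N ω : ℝ) ^ 2)⁻¹ * ∑ i ∈ Finset.Icc 1 (N ω), S n i ω := by
    intro n
    refine ((measurable_const.mul hcast).inv).add ?_
    refine ((hcast.pow_const 2).inv).mul ?_
    have h := aux_sum_meas N hNmeas (fun i ω => S n i ω) fun i => hSmeas n i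
    exact h
  have hYnn : ∀ n, ∀ᵐ ω ∂P, 0 ≤
      (δ * (N ω : ℝ))⁻¹ + ((N ω : ℝ) ^ 2)⁻¹ * ∑ i ∈ Finset.Icc 1 (N ω), S n i ω := by
    intro n
    filter_upwards [hSnnae n] with ω hω
    have h1 : (0 : ℝ) ≤ (δ * (N ω : ℝ))⁻¹ := by
      have := hNpos ω; positivity
    exact add_nonneg h1 (mul_nonneg (by positivity)
      (Finset.sum_nonneg fun i _ => hω i))
  -- the key one-step recursion bound
  have key : ∀ n, ∫⁻ ω, ENNReal.ofReal (R (n + 1) ω ^ m) ∂P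
      ≤ (∑ k ∈ Finset.range m,
            ENNReal.ofReal ((m.choose k : ℝ) * (δ ^ (m - k))⁻¹)
              * (q * ∫⁻ ω, ENNReal.ofReal (Rinf ω ^ k) ∂P))
          + q * ∫⁻ ω, ENNReal.ofReal (R n ω ^ m) ∂P := by
    intro n
    have step1 := aux_layercake_mono P (hRmeas (n + 1)) (hYmeas n)
      (Filter.Eventually.of_forall (hR0nonneg (n + 1))) (hYnn n) (hdom n) hm
    have step2 : ∫⁻ ω, ENNReal.ofReal (((δ * (N ω : ℝ))⁻¹
          + ((N ω : ℝ) ^ 2)⁻¹ * ∑ i ∈ Finset.Icc 1 (N ω), S n i ω) ^ m) ∂P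
        ≤ ∫⁻ ω, ENNReal.ofReal (∑ k ∈ Finset.range (m + 1),
            (m.choose k : ℝ) * (δ ^ (m - k))⁻¹
              * (((N ω : ℝ) ^ (m + 1))⁻¹ * ∑ i ∈ Finset.Icc 1 (N ω), S n i ω ^ k)) ∂P := by
      refine lintegral_mono_ae ?_
      filter_upwards [hSnnae n] with ω hω
      exact ENNReal.ofReal_le_ofReal (aux_ptwise δ hδ m (N ω) (hN ω) (fun i => S n i ω) hω)
    have step3 : ∫⁻ ω, ENNReal.ofReal (∑ k ∈ Finset.range (m + 1),
            (m.choose k : ℝ) * (δ ^ (m - k))⁻¹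
              * (((N ω : ℝ) ^ (m + 1))⁻¹ * ∑ i ∈ Finset.Icc 1 (N ω), S n i ω ^ k)) ∂P
        = ∑ k ∈ Finset.range (m + 1),
            ENNReal.ofReal ((m.choose k : ℝ) * (δ ^ (m - k))⁻¹)
              * (q * ∫⁻ ω, ENNReal.ofReal (R n ω ^ k) ∂P) := by
      have congr1 : ∀ᵐ ω ∂P, ENNReal.ofReal (∑ k ∈ Finset.range (m + 1),
            (m.choose k : ℝ) * (δ ^ (m - k))⁻¹
              * (((N ω : ℝ) ^ (m + 1))⁻¹ * ∑ i ∈ Finset.Icc 1 (N ω), S n i ω ^ k))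
          = ∑ k ∈ Finset.range (m + 1), ENNReal.ofReal (
            (m.choose k : ℝ) * (δ ^ (m - k))⁻¹
              * (((N ω : ℝ) ^ (m + 1))⁻¹ * ∑ i ∈ Finset.Icc 1 (N ω), S n i ω ^ k)) := by
        filter_upwards [hSnnae n] with ω hω
        refine ENNReal.ofReal_sum_of_nonneg fun k _ => ?_
        have hsnn : (0 : ℝ) ≤ ∑ i ∈ Finset.Icc 1 (N ω), S n i ω ^ k :=
          Finset.sum_nonneg fun i _ => pow_nonneg (hω i) k
        have := hNpos ω
        positivity
      rw [lintegral_congr_ae congr1,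
        lintegral_finset_sum _ (f := fun k ω => ENNReal.ofReal
              ((m.choose k : ℝ) * (δ ^ (m - k))⁻¹
                * (((N ω : ℝ) ^ (m + 1))⁻¹ * ∑ i ∈ Finset.Icc 1 (N ω), S n i ω ^ k))) (fun k _ =>
          (measurable_const.mul (((hcast.pow_const (m + 1)).inv).mul
            (hsum_meas n k))).ennreal_ofReal)]
      refine Finset.sum_congr rfl fun k _ => ?_
      have hc : (0 : ℝ) ≤ (m.choose k : ℝ) * (δ ^ (m - k))⁻¹ := by positivity
      simp_rw [ENNReal.ofReal_mul hc]
      rw [lintegral_const_mul _ (f := fun ω => ENNReal.ofReal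
          (((N ω : ℝ) ^ (m + 1))⁻¹ * ∑ i ∈ Finset.Icc 1 (N ω), S n i ω ^ k))
        ((((hcast.pow_const (m + 1)).inv).mul
        (hsum_meas n k)).ennreal_ofReal),
        aux_indep_term P N hNmeas hN (S n) (hSmeas n) (hSN n) (R n) (hR0nonneg n)
          (hSident n) (fun i => aux_ae_nonneg (hSident n i) (hR0nonneg n)) m k,
        ← hq]
    have split : ∑ k ∈ Finset.range (m + 1),
          ENNReal.ofReal ((m.choose k : ℝ) * (δ ^ (m - k))⁻¹)
            * (q * ∫⁻ ω, ENNReal.ofReal (R n ω ^ k) ∂P)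
        = (∑ k ∈ Finset.range m,
            ENNReal.ofReal ((m.choose k : ℝ) * (δ ^ (m - k))⁻¹)
              * (q * ∫⁻ ω, ENNReal.ofReal (R n ω ^ k) ∂P))
          + q * ∫⁻ ω, ENNReal.ofReal (R n ω ^ m) ∂P := by
      rw [Finset.sum_range_succ]
      congr 1
      simp [Nat.choose_self, Nat.sub_self]
    have mono2 : ∑ k ∈ Finset.range m,
          ENNReal.ofReal ((m.choose k : ℝ) * (δ ^ (m - k))⁻¹)
            * (q * ∫⁻ ω, ENNReal.ofReal (R n ω ^ k) ∂P)
        ≤ ∑ k ∈ Finset.range m,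
          ENNReal.ofReal ((m.choose k : ℝ) * (δ ^ (m - k))⁻¹)
            * (q * ∫⁻ ω, ENNReal.ofReal (Rinf ω ^ k) ∂P) :=
      Finset.sum_le_sum fun k _ =>
        mul_le_mul_right (mul_le_mul_right (hAL n k) q) _
    calc ∫⁻ ω, ENNReal.ofReal (R (n + 1) ω ^ m) ∂P
        ≤ _ := step1
      _ ≤ _ := step2
      _ = _ := step3
      _ = _ := split
      _ ≤ _ := add_le_add mono2 le_rfl
  set Bq : ℝ≥0∞ := ∑ k ∈ Finset.range m,
      ENNReal.ofReal ((m.choose k : ℝ) * (δ ^ (m - k))⁻¹)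
        * (q * ∫⁻ ω, ENNReal.ofReal (Rinf ω ^ k) ∂P) with hBq
  have geom : ∀ n, ∫⁻ ω, ENNReal.ofReal (R n ω ^ m) ∂P
      ≤ Bq * ∑ i ∈ Finset.range n, q ^ i := by
    intro n
    induction n with
    | zero => simp [hRzero, zero_pow (by omega : m ≠ 0)]
    | succ n ih =>
      calc ∫⁻ ω, ENNReal.ofReal (R (n + 1) ω ^ m) ∂P
          ≤ Bq + q * ∫⁻ ω, ENNReal.ofReal (R n ω ^ m) ∂P := key n
        _ ≤ Bq + q * (Bq * ∑ i ∈ Finset.range n, q ^ i) :=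
            add_le_add le_rfl (mul_le_mul_right ih q)
        _ = Bq * ∑ i ∈ Finset.range (n + 1), q ^ i := by
            rw [geom_sum_succ]
            ring
  have geom' : ∀ n, ∫⁻ ω, ENNReal.ofReal (R n ω ^ m) ∂P ≤ Bq * (1 - q)⁻¹ := by
    intro n
    refine (geom n).trans (mul_le_mul_right ?_ Bq)
    rw [← ENNReal.tsum_geometric]
    exact Summable.sum_le_tsum _ (fun _ _ => bot_le) ENNReal.summable
  have hLm_le : ∫⁻ ω, ENNReal.ofReal (Rinf ω ^ m) ∂P ≤ Bq * (1 - q)⁻¹ := by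
    have hconv : ∀ᵐ ω ∂P, Filter.Tendsto (fun n => ENNReal.ofReal (R n ω ^ m))
        Filter.atTop (nhds (ENNReal.ofReal (Rinf ω ^ m))) := by
      filter_upwards [hRlim] with ω h
      exact (ENNReal.continuous_ofReal.tendsto _).comp (h.pow m)
    have heq : ∫⁻ ω, ENNReal.ofReal (Rinf ω ^ m) ∂P
        = ∫⁻ ω, Filter.liminf (fun n => ENNReal.ofReal (R n ω ^ m)) Filter.atTop ∂P := by
      refine lintegral_congr_ae ?_
      filter_upwards [hconv] with ω h
      exact h.liminf_eq.symm
    rw [heq]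
    refine (lintegral_liminf_le fun n =>
      ((hRmeas n).pow_const m).ennreal_ofReal).trans ?_
    have hl : Filter.liminf (fun n => ∫⁻ ω, ENNReal.ofReal (R n ω ^ m) ∂P) Filter.atTop
        ≤ Filter.liminf (fun _ : ℕ => Bq * (1 - q)⁻¹) Filter.atTop :=
      Filter.liminf_le_liminf (Filter.Eventually.of_forall geom')
    simpa using hl
  have hBqfin : Bq < ⊤ := by
    rw [hBq]
    refine ENNReal.sum_lt_top.mpr fun k hk => ?_
    exact ENNReal.mul_lt_top ENNReal.ofReal_lt_top
      (ENNReal.mul_lt_top (lt_of_le_of_lt q_le_one ENNReal.one_lt_top)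
        (Lfin k (Finset.mem_range.mp hk)))
  have hsub_pos : (0 : ℝ≥0∞) < 1 - q := tsub_pos_iff_lt.mpr q_lt_one
  have hDfin : Bq * (1 - q)⁻¹ < ⊤ :=
    ENNReal.mul_lt_top hBqfin (ENNReal.inv_lt_top.mpr hsub_pos)
  -- real-integral identifications
  have hNint : Integrable (fun ω => ((N ω : ℝ) ^ m)⁻¹) P := by
    refine Integrable.mono' (integrable_const (1 : ℝ))
      ((hcast.pow_const m).inv).aestronglyMeasurable ?_
    refine Filter.Eventually.of_forall fun ω => ?_
    rw [Real.norm_eq_abs, abs_of_nonneg (by positivity)]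
    exact inv_le_one_of_one_le₀ (one_le_pow₀ (by exact_mod_cast hN ω))
  have hqR : ENNReal.ofReal (∫ ω, ((N ω : ℝ) ^ m)⁻¹ ∂P) = q := by
    rw [hq]
    exact ofReal_integral_eq_lintegral_ofReal hNint
      (Filter.Eventually.of_forall fun ω => by positivity)
  have hqRnn : 0 ≤ ∫ ω, ((N ω : ℝ) ^ m)⁻¹ ∂P :=
    integral_nonneg fun ω => by positivity
  have hqRlt1 : ∫ ω, ((N ω : ℝ) ^ m)⁻¹ ∂P < 1 := by
    rw [← ENNReal.ofReal_lt_one, hqR]; exact q_lt_one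
  have hIk : ∀ k, k < m →
      ENNReal.ofReal (∫ ω, Rinf ω ^ k ∂P) = (∫⁻ ω, ENNReal.ofReal (Rinf ω ^ k) ∂P)
        ∧ 0 ≤ ∫ ω, Rinf ω ^ k ∂P := by
    intro k hk
    have hnn : ∀ᵐ ω ∂P, 0 ≤ Rinf ω ^ k := hRinfnn.mono fun ω h => pow_nonneg h k
    have hint : Integrable (fun ω => Rinf ω ^ k) P := by
      refine ⟨(hRinfmeas.pow_const k).aestronglyMeasurable, ?_⟩
      rw [hasFiniteIntegral_iff_ofReal hnn]
      exact Lfin k hk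
    exact ⟨ofReal_integral_eq_lintegral_ofReal hint hnn, integral_nonneg_of_ae hnn⟩
  constructor
  · exact lt_of_le_of_lt hLm_le hDfin
  · intro n
    refine (geom' n).trans ?_
    have hBqeq : Bq = ENNReal.ofReal (∑ k ∈ Finset.range m,
        (m.choose k : ℝ) * δ ^ ((k : ℤ) - (m : ℤ))
          * (∫ ω, ((N ω : ℝ) ^ m)⁻¹ ∂P) * ∫ ω, Rinf ω ^ k ∂P) := by
      rw [hBq, ENNReal.ofReal_sum_of_nonneg]
      · refine Finset.sum_congr rfl fun k hk => ?_
        have hk' := Finset.mem_range.mp hk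
        have hzp : δ ^ ((k : ℤ) - (m : ℤ)) = (δ ^ (m - k))⁻¹ := by
          have hcastmk : ((k : ℤ) - (m : ℤ)) = -(((m - k : ℕ) : ℤ)) := by
            have := Nat.cast_sub (le_of_lt hk') (R := ℤ)
            omega
          rw [hcastmk, zpow_neg, zpow_natCast]
        have hc : (0 : ℝ) ≤ (m.choose k : ℝ) * (δ ^ (m - k))⁻¹ := by positivity
        rw [hzp, ENNReal.ofReal_mul (mul_nonneg hc hqRnn), ENNReal.ofReal_mul hc,
          hqR, (hIk k hk').1]
        ring
      · intro k hk
        have hk' := Finset.mem_range.mp hk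
        have hzpnn : (0 : ℝ) ≤ δ ^ ((k : ℤ) - (m : ℤ)) := le_of_lt (zpow_pos hδ _)
        exact mul_nonneg (mul_nonneg (mul_nonneg (by positivity) hzpnn) hqRnn)
          (hIk k hk').2
    have h1mq : (1 : ℝ≥0∞) - q = ENNReal.ofReal (1 - ∫ ω, ((N ω : ℝ) ^ m)⁻¹ ∂P) := by
      rw [ENNReal.ofReal_sub 1 hqRnn, ENNReal.ofReal_one, hqR]
    rw [ENNReal.ofReal_div_of_pos (by linarith), div_eq_mul_inv, ← h1mq, ← hBqeq]
end
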